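/- Let x₁, …, x_n (n ≥ 1) be elements of an abelian group G forming a minimal zero-sum sequence, let X ⊆ G be a finite set, and let σ be a permutation of {1, …, n} such that for every i ∈ {1, …, n} the partial sum Σ_{l=1}^{i} x_{σ(l)} belongs to X. Then: (i) n ≤ |X|; (ii) if moreover n ≥ 3, x_{σ(2)} ≠ x_{σ(3)} and x_{σ(1)} + x_{σ(3)} ∈ X, then n ≤ |X| − 1. -/

import Mathlib

theorem counting_partial_sums (G : Type*) [AddCommGroup G] (n : ℕ) (hn : 1 ≤ n)
    (x : Fin n → G) (hsum : ∑ i, x i = 0)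
    (hmin : ∀ I : Finset (Fin n), I.Nonempty → I ≠ Finset.univ → ∑ i ∈ I, x i ≠ 0)
    (X : Finset G) (σ : Equiv.Perm (Fin n))
    (hX : ∀ i : Fin n, (∑ l ∈ Finset.Iic i, x (σ l)) ∈ X) :
    n ≤ X.card ∧
    (∀ (hn3 : 3 ≤ n), x (σ ⟨1, by omega⟩) ≠ x (σ ⟨2, by omega⟩) →
      x (σ ⟨0, by omega⟩) + x (σ ⟨2, by omega⟩) ∈ X → n ≤ X.card - 1) := by
  classical
  set f : Fin n → G := fun i => ∑ l ∈ Finset.Iic i, x (σ l) with hf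
  -- key: a sum over a nonempty set avoiding 0 is nonzero
  have key : ∀ S : Finset (Fin n), S.Nonempty → (⟨0, by omega⟩ : Fin n) ∉ S →
      ∑ l ∈ S, x (σ l) ≠ 0 := by
    intro S hSne h0 h
    have hsum' : ∑ i ∈ S.image σ, x i = 0 := by
      rw [Finset.sum_image (fun a _ b _ hab => σ.injective hab)]; exact h
    refine hmin (S.image σ) (hSne.image σ) ?_ hsum'
    intro heq
    have hmem : σ ⟨0, by omega⟩ ∈ S.image σ := heq ▸ Finset.mem_univ _
    obtain ⟨a, ha, hae⟩ := Finset.mem_image.mp hmem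
    exact h0 (σ.injective hae ▸ ha)
  have hne : ∀ i j : Fin n, i < j → f i ≠ f j := by
    intro i j hij heq
    have hsub : Finset.Iic i ∪ Finset.Ioc i j = Finset.Iic j := by
      ext l
      simp only [Finset.mem_union, Finset.mem_Iic, Finset.mem_Ioc, Fin.le_def, Fin.lt_def]
      omega
    have hdisj : Disjoint (Finset.Iic i) (Finset.Ioc i j) := by
      simp [Finset.disjoint_left, Finset.mem_Iic, Finset.mem_Ioc]
      intro a hai haj
      exact absurd hai (not_le.mpr haj)
    have : f j = f i + ∑ l ∈ Finset.Ioc i j, x (σ l) := by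
      rw [hf]; dsimp only
      rw [← hsub, Finset.sum_union hdisj]
    have h0 : ∑ l ∈ Finset.Ioc i j, x (σ l) = 0 := by
      rw [heq] at this
      exact (add_eq_left.mp this.symm)
    refine key _ ⟨j, by simp [Finset.mem_Ioc, hij]⟩ ?_ h0
    simp only [Finset.mem_Ioc, not_and]
    intro h _
    exact absurd h (by simp [Fin.lt_def])
  have finj : Function.Injective f := by
    intro i j h
    rcases lt_trichotomy i j with hlt | heq | hgt
    · exact absurd h (hne i j hlt)
    · exact heq
    · exact absurd h.symm (hne j i hgt)
  have himg : Finset.univ.image f ⊆ X := by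
    intro y hy
    obtain ⟨i, _, rfl⟩ := Finset.mem_image.mp hy
    exact hX i
  have hcardimg : (Finset.univ.image f).card = n := by
    rw [Finset.card_image_of_injective _ finj, Finset.card_univ, Fintype.card_fin]
  constructor
  · calc n = (Finset.univ.image f).card := hcardimg.symm
      _ ≤ X.card := Finset.card_le_card himg
  · intro hn3 hne12 hmemX
    set i0 : Fin n := ⟨0, by omega⟩
    set i1 : Fin n := ⟨1, by omega⟩
    set i2 : Fin n := ⟨2, by omega⟩
    set S' : G := x (σ i0) + x (σ i2) with hS'
    have hnotmem : S' ∉ Finset.univ.image f := by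
      intro hmem
      obtain ⟨i, _, hfi⟩ := Finset.mem_image.mp hmem
      rcases Nat.lt_or_ge i.val 2 with h2 | h2
      · interval_cases h : i.val
        · -- i = 0 : f i = x (σ i0)
          have hIic : Finset.Iic i = {i0} := by
            ext l
            simp only [Finset.mem_Iic, Finset.mem_singleton, Fin.le_def, Fin.ext_iff, i0, Fin.val_mk]
            omega
          rw [hf] at hfi; dsimp only at hfi
          rw [hIic, Finset.sum_singleton] at hfi
          have : x (σ i2) = 0 := by
            rw [hS'] at hfi
            exact add_eq_left.mp hfi.symm
          refine key {i2} ⟨i2, Finset.mem_singleton_self _⟩ ?_ (by simpa using this)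
          simp [Finset.mem_singleton, i0, i2, Fin.ext_iff]
        · -- i = 1 : f i = x (σ i0) + x (σ i1)
          have hIic : Finset.Iic i = {i0, i1} := by
            ext l
            simp only [Finset.mem_Iic, Finset.mem_insert, Finset.mem_singleton,
              Fin.le_def, Fin.ext_iff, i0, i1, Fin.val_mk]
            omega
          have hne01 : i0 ≠ i1 := by simp [i0, i1, Fin.ext_iff]
          rw [hf] at hfi; dsimp only at hfi
          rw [hIic, Finset.sum_insert (by simpa using hne01), Finset.sum_singleton] at hfi
          rw [hS'] at hfi
          exact hne12 (add_left_cancel hfi)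
      · -- i ≥ 2
        set T : Finset (Fin n) := Finset.Iic i \ {i0, i2} with hT
        have hsubset : ({i0, i2} : Finset (Fin n)) ⊆ Finset.Iic i := by
          intro l hl
          simp only [Finset.mem_insert, Finset.mem_singleton] at hl
          rcases hl with rfl | rfl <;> simp [Finset.mem_Iic, Fin.le_def, i0, i2] <;> omega
        have hsplit : f i = (∑ l ∈ ({i0, i2} : Finset (Fin n)), x (σ l)) + ∑ l ∈ T, x (σ l) := by
          rw [hf]; dsimp only
          rw [hT, ← Finset.sum_sdiff hsubset, add_comm]
        have hpair : ∑ l ∈ ({i0, i2} : Finset (Fin n)), x (σ l) = S' := by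
          have hne02 : i0 ≠ i2 := by simp [i0, i2, Fin.ext_iff]
          rw [Finset.sum_insert (by simpa using hne02), Finset.sum_singleton]
        have hTsum : ∑ l ∈ T, x (σ l) = 0 := by
          rw [hfi, hpair] at hsplit
          exact add_eq_left.mp hsplit.symm
        refine key T ⟨i1, ?_⟩ ?_ hTsum
        · simp only [hT, Finset.mem_sdiff, Finset.mem_Iic, Finset.mem_insert,
            Finset.mem_singleton, Fin.le_def, Fin.ext_iff, i0, i1, i2]
          omega
        · simp only [hT, Finset.mem_sdiff, Finset.mem_insert, Finset.mem_singleton, not_and,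
            Fin.ext_iff, i0, i2]
          intro _
          simp
    have hins : insert S' (Finset.univ.image f) ⊆ X := by
      intro y hy
      rcases Finset.mem_insert.mp hy with rfl | hy
      · exact hmemX
      · exact himg hy
    have : n + 1 ≤ X.card := by
      have := Finset.card_le_card hins
      rwa [Finset.card_insert_of_notMem hnotmem, hcardimg] at this
    omega
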